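/- Let T ≥ 1 be finite and H ∈ (0,1/2). There exists a constant C > 0 depending only on T such that for all 0 < θ < s ≤ T: |K_H(s,θ)| ≤ C · c_H · (s − θ)^{H − 1/2} · θ^{H − 1/2}. -/

import Mathlib

open MeasureTheory intervalIntegral

/-- The normalizing constant `c_H = √(2H / ((1-2H) B(1-2H, H+1/2)))`, where the Beta function is
expressed via Gamma functions: `B(a,b) = Γ(a)Γ(b)/Γ(a+b)`. -/
noncomputable def cH (H : ℝ) : ℝ :=
  Real.sqrt (2 * H /
    ((1 - 2 * H) * (Real.Gamma (1 - 2 * H) * Real.Gamma (H + 1 / 2) /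
      Real.Gamma ((1 - 2 * H) + (H + 1 / 2)))))

/-- The fractional Brownian kernel
`K_H(t,s) = c_H [ (t/s)^{H-1/2}(t-s)^{H-1/2} + (1/2-H) s^{1/2-H} ∫_s^t u^{H-3/2}(u-s)^{H-1/2} du ]`. -/
noncomputable def KH (H t s : ℝ) : ℝ :=
  cH H * ((t / s) ^ (H - 1 / 2) * (t - s) ^ (H - 1 / 2) +
    (1 / 2 - H) * s ^ (1 / 2 - H) * ∫ u in s..t, u ^ (H - 3 / 2) * (u - s) ^ (H - 1 / 2))


private lemma integ_shift {r : ℝ} (hr : -1 < r) (θ a b : ℝ) :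
    IntervalIntegrable (fun u => (u - θ) ^ r) volume a b := by
  simpa using (intervalIntegrable_rpow' (a := a - θ) (b := b - θ) hr).comp_sub_right θ

private lemma int_shift_val {r : ℝ} (hr : -1 < r) (θ a b : ℝ) :
    ∫ u in a..b, (u - θ) ^ r = ((b - θ) ^ (r + 1) - (a - θ) ^ (r + 1)) / (r + 1) := by
  rw [intervalIntegral.integral_comp_sub_right (fun x => x ^ r) θ,
    integral_rpow (Or.inl hr)]


set_option maxHeartbeats 2000000 in
/-- There is a constant `C > 0` depending only on `T` such that for every
`H ∈ (0,1/2)` and all `0 < θ < s ≤ T`: `|K_H(s,θ)| ≤ C c_H (s−θ)^{H−1/2} θ^{H−1/2}`. -/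
theorem KH_bound (T : ℝ) (hT : 1 ≤ T) :
    ∃ C > (0 : ℝ), ∀ H ∈ Set.Ioo (0 : ℝ) (1 / 2),
      ∀ θ s : ℝ, 0 < θ → θ < s → s ≤ T →
        |KH H s θ| ≤ C * cH H * (s - θ) ^ (H - 1 / 2) * θ ^ (H - 1 / 2) := by
  have hT0 : (0:ℝ) < T := lt_of_lt_of_le one_pos hT
  refine ⟨4 * Real.sqrt T, by positivity, ?_⟩
  rintro H ⟨hH0, hH2⟩ θ s hθ hθs hsT
  have hs0 : 0 < s := hθ.trans hθs
  have hd0 : 0 < s - θ := by linarith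
  have hr0 : H - 1/2 < 0 := by linarith
  have hr1 : (-1:ℝ) < H - 1/2 := by linarith
  have hθT : θ ≤ T := le_trans hθs.le hsT
  -- `1 ≤ √T * x^(H-1/2)` for `0 < x ≤ T`
  have key : ∀ x : ℝ, 0 < x → x ≤ T → 1 ≤ Real.sqrt T * x ^ (H - 1/2) := by
    intro x hx hxT
    have h1 : T ^ (-(1/2) : ℝ) ≤ x ^ (H - 1/2) :=
      le_trans (Real.rpow_le_rpow_of_exponent_le hT (by linarith))
        (Real.rpow_le_rpow_of_nonpos hx hxT hr0.le)
    calc (1:ℝ) = T ^ ((1:ℝ)/2) * T ^ (-(1/2):ℝ) := by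
          rw [← Real.rpow_add hT0]; norm_num
      _ ≤ Real.sqrt T * x ^ (H - 1/2) := by
          rw [Real.sqrt_eq_rpow]
          exact mul_le_mul_of_nonneg_left h1 (Real.rpow_nonneg hT0.le _)
  set t1 : ℝ := (s / θ) ^ (H - 1/2) * (s - θ) ^ (H - 1/2) with ht1def
  set I : ℝ := ∫ u in θ..s, u ^ (H - 3/2) * (u - θ) ^ (H - 1/2) with hIdef
  set t2 : ℝ := (1/2 - H) * θ ^ (1/2 - H) * I with ht2def
  have hX : (0:ℝ) ≤ (s - θ) ^ (H - 1/2) * θ ^ (H - 1/2) :=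
    mul_nonneg (Real.rpow_nonneg hd0.le _) (Real.rpow_nonneg hθ.le _)
  have hI0 : 0 ≤ I := intervalIntegral.integral_nonneg hθs.le (fun u hu =>
    mul_nonneg (Real.rpow_nonneg (le_trans hθ.le hu.1) _)
      (Real.rpow_nonneg (by linarith [hu.1]) _))
  have ht1nn : 0 ≤ t1 := mul_nonneg (Real.rpow_nonneg (by positivity) _) (Real.rpow_nonneg hd0.le _)
  have ht2nn : 0 ≤ t2 :=
    mul_nonneg (mul_nonneg (by linarith) (Real.rpow_nonneg hθ.le _)) hI0
  -- bound on t1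
  have ht1 : t1 ≤ Real.sqrt T * ((s - θ) ^ (H - 1/2) * θ ^ (H - 1/2)) := by
    have h1 : (s / θ) ^ (H - 1/2) ≤ 1 :=
      Real.rpow_le_one_of_one_le_of_nonpos ((one_le_div hθ).mpr hθs.le) hr0.le
    calc t1 ≤ 1 * (s - θ) ^ (H - 1/2) :=
          mul_le_mul_of_nonneg_right h1 (Real.rpow_nonneg hd0.le _)
      _ = (s - θ) ^ (H - 1/2) * 1 := by ring
      _ ≤ (s - θ) ^ (H - 1/2) * (Real.sqrt T * θ ^ (H - 1/2)) :=
          mul_le_mul_of_nonneg_left (key θ hθ hθT) (Real.rpow_nonneg hd0.le _)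
      _ = Real.sqrt T * ((s - θ) ^ (H - 1/2) * θ ^ (H - 1/2)) := by ring
  -- bound on t2
  have ht2 : t2 ≤ 2 * Real.sqrt T * ((s - θ) ^ (H - 1/2) * θ ^ (H - 1/2)) := by
    by_cases hf : IntervalIntegrable
        (fun u => u ^ (H - 3/2) * (u - θ) ^ (H - 1/2)) volume θ s
    · rcases le_or_gt s (2 * θ) with hc | hc
      · -- s ≤ 2θ : show t2 ≤ (s-θ)^(H-1/2)
        have core : t2 ≤ (s - θ) ^ (H - 1/2) := by
          have hgi : IntervalIntegrable (fun u => θ ^ (H - 3/2) * (u - θ) ^ (H - 1/2)) volume θ s :=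
            (integ_shift hr1 θ θ s).const_mul _
          have hmono : I ≤ θ ^ (H - 3/2) * ((s - θ) ^ (H - 1/2 + 1) / (H - 1/2 + 1)) := by
            have h1 : I ≤ ∫ u in θ..s, θ ^ (H - 3/2) * (u - θ) ^ (H - 1/2) := by
              rw [hIdef]
              apply intervalIntegral.integral_mono_on hθs.le hf hgi
              intro u hu
              exact mul_le_mul_of_nonneg_right
                (Real.rpow_le_rpow_of_nonpos hθ hu.1 (by linarith))
                (Real.rpow_nonneg (by linarith [hu.1]) _)
            have h2 : (∫ u in θ..s, θ ^ (H - 3/2) * (u - θ) ^ (H - 1/2))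
                = θ ^ (H - 3/2) * ((s - θ) ^ (H - 1/2 + 1) / (H - 1/2 + 1)) := by
              rw [intervalIntegral.integral_const_mul, int_shift_val hr1, sub_self,
                Real.zero_rpow (by linarith), sub_zero]
            exact h1.trans_eq h2
          have e1 : θ ^ (1/2 - H) * θ ^ (H - 3/2) = θ⁻¹ := by
            rw [← Real.rpow_add hθ, show (1/2 - H + (H - 3/2) : ℝ) = -1 from by ring,
              Real.rpow_neg_one]
          have e2 : (s - θ) ^ (H - 1/2 + 1) = (s - θ) ^ (H - 1/2) * (s - θ) :=
            Real.rpow_add_one hd0.ne' _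
          have hden : (0:ℝ) < H - 1/2 + 1 := by linarith
          have step : (1/2 - H) * θ ^ (1/2 - H) *
                (θ ^ (H - 3/2) * ((s - θ) ^ (H - 1/2 + 1) / (H - 1/2 + 1)))
              = ((1/2 - H) * (s - θ) / (θ * (H - 1/2 + 1))) * (s - θ) ^ (H - 1/2) := by
            rw [e2, show (1/2 - H) * θ ^ (1/2 - H) *
                (θ ^ (H - 3/2) * ((s - θ) ^ (H - 1/2) * (s - θ) / (H - 1/2 + 1)))
              = (θ ^ (1/2 - H) * θ ^ (H - 3/2)) *
                ((1/2 - H) * ((s - θ) ^ (H - 1/2) * (s - θ)) / (H - 1/2 + 1)) from by ring, e1]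
            field_simp
          have hcoef : (1/2 - H) * (s - θ) / (θ * (H - 1/2 + 1)) ≤ 1 := by
            rw [div_le_one (by positivity)]
            nlinarith
          calc t2 ≤ (1/2 - H) * θ ^ (1/2 - H) *
                (θ ^ (H - 3/2) * ((s - θ) ^ (H - 1/2 + 1) / (H - 1/2 + 1))) :=
              mul_le_mul_of_nonneg_left hmono
                (mul_nonneg (by linarith) (Real.rpow_nonneg hθ.le _))
            _ = ((1/2 - H) * (s - θ) / (θ * (H - 1/2 + 1))) * (s - θ) ^ (H - 1/2) := step
            _ ≤ 1 * (s - θ) ^ (H - 1/2) :=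
              mul_le_mul_of_nonneg_right hcoef (Real.rpow_nonneg hd0.le _)
            _ = (s - θ) ^ (H - 1/2) := one_mul _
        calc t2 ≤ (s - θ) ^ (H - 1/2) * 1 := by rw [mul_one]; exact core
          _ ≤ (s - θ) ^ (H - 1/2) * (Real.sqrt T * θ ^ (H - 1/2)) :=
              mul_le_mul_of_nonneg_left (key θ hθ hθT) (Real.rpow_nonneg hd0.le _)
          _ ≤ 2 * Real.sqrt T * ((s - θ) ^ (H - 1/2) * θ ^ (H - 1/2)) := by
              nlinarith [hX, Real.sqrt_nonneg T]
      · -- 2θ < s : show t2 ≤ 2 * θ^(H-1/2)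
        have h2θ : θ < 2 * θ := by linarith
        have hsub1 : Set.uIcc θ (2*θ) ⊆ Set.uIcc θ s := by
          rw [Set.uIcc_of_le hθs.le, Set.uIcc_of_le h2θ.le]
          exact Set.Icc_subset_Icc le_rfl (by linarith)
        have hsub2 : Set.uIcc (2*θ) s ⊆ Set.uIcc θ s := by
          rw [Set.uIcc_of_le hθs.le, Set.uIcc_of_le hc.le]
          exact Set.Icc_subset_Icc (by linarith) le_rfl
        have hf1 := hf.mono_set hsub1
        have hf2 := hf.mono_set hsub2
        have hsplit : I = (∫ u in θ..(2*θ), u ^ (H - 3/2) * (u - θ) ^ (H - 1/2))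
            + ∫ u in (2*θ)..s, u ^ (H - 3/2) * (u - θ) ^ (H - 1/2) := by
          rw [hIdef, intervalIntegral.integral_add_adjacent_intervals hf1 hf2]
        have hI1 : (∫ u in θ..(2*θ), u ^ (H - 3/2) * (u - θ) ^ (H - 1/2))
            ≤ θ ^ (H - 3/2) * (θ ^ (H - 1/2 + 1) / (H - 1/2 + 1)) := by
          have hgi : IntervalIntegrable (fun u => θ ^ (H - 3/2) * (u - θ) ^ (H - 1/2))
              volume θ (2*θ) := (integ_shift hr1 θ θ (2*θ)).const_mul _
          have h1 : (∫ u in θ..(2*θ), u ^ (H - 3/2) * (u - θ) ^ (H - 1/2))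
              ≤ ∫ u in θ..(2*θ), θ ^ (H - 3/2) * (u - θ) ^ (H - 1/2) := by
            apply intervalIntegral.integral_mono_on h2θ.le hf1 hgi
            intro u hu
            exact mul_le_mul_of_nonneg_right
              (Real.rpow_le_rpow_of_nonpos hθ hu.1 (by linarith))
              (Real.rpow_nonneg (by linarith [hu.1]) _)
          have h2 : (∫ u in θ..(2*θ), θ ^ (H - 3/2) * (u - θ) ^ (H - 1/2))
              = θ ^ (H - 3/2) * (θ ^ (H - 1/2 + 1) / (H - 1/2 + 1)) := by
            rw [intervalIntegral.integral_const_mul, int_shift_val hr1, sub_self,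
              Real.zero_rpow (by linarith), sub_zero, show (2*θ - θ : ℝ) = θ from by ring]
          exact h1.trans_eq h2
        have h0mem : (0:ℝ) ∉ Set.uIcc (2*θ) s := by
          rw [Set.uIcc_of_le hc.le]
          rintro ⟨h0, -⟩; linarith
        have hI2 : (∫ u in (2*θ)..s, u ^ (H - 3/2) * (u - θ) ^ (H - 1/2))
            ≤ 2 * (θ ^ (2*H - 2 + 1) / (1 - 2*H)) := by
          have hg2 : IntervalIntegrable (fun u => 2 * u ^ (2*H - 2)) volume (2*θ) s :=
            (intervalIntegrable_rpow (Or.inr h0mem)).const_mul _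
          have h1 : (∫ u in (2*θ)..s, u ^ (H - 3/2) * (u - θ) ^ (H - 1/2))
              ≤ ∫ u in (2*θ)..s, 2 * u ^ (2*H - 2) := by
            apply intervalIntegral.integral_mono_on hc.le hf2 hg2
            intro u hu
            have hu0 : 0 < u := lt_of_lt_of_le (by linarith) hu.1
            have hstep : (u - θ) ^ (H - 1/2) ≤ 2 * u ^ (H - 1/2) := by
              have ha : (u - θ) ^ (H - 1/2) ≤ (u/2) ^ (H - 1/2) :=
                Real.rpow_le_rpow_of_nonpos (by linarith [hu.1]) (by linarith [hu.1]) hr0.le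
              have hb : (u/2 : ℝ) ^ (H - 1/2) = u ^ (H - 1/2) / (2:ℝ) ^ (H - 1/2) :=
                Real.div_rpow hu0.le (by norm_num) _
              have hc2 : u ^ (H - 1/2) / (2:ℝ) ^ (H - 1/2)
                  = u ^ (H - 1/2) * (2:ℝ) ^ (1/2 - H) := by
                rw [div_eq_mul_inv, ← Real.rpow_neg (by norm_num : (0:ℝ) ≤ 2),
                  show (-(H - 1/2) : ℝ) = 1/2 - H from by ring]
              have hd2 : (2:ℝ) ^ ((1:ℝ)/2 - H) ≤ 2 := by
                calc (2:ℝ) ^ ((1:ℝ)/2 - H) ≤ (2:ℝ) ^ (1:ℝ) :=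
                      Real.rpow_le_rpow_of_exponent_le one_le_two (by linarith)
                  _ = 2 := Real.rpow_one 2
              calc (u - θ) ^ (H - 1/2) ≤ (u/2) ^ (H - 1/2) := ha
                _ = u ^ (H - 1/2) * (2:ℝ) ^ (1/2 - H) := by rw [hb, hc2]
                _ ≤ u ^ (H - 1/2) * 2 :=
                    mul_le_mul_of_nonneg_left hd2 (Real.rpow_nonneg hu0.le _)
                _ = 2 * u ^ (H - 1/2) := by ring
            calc u ^ (H - 3/2) * (u - θ) ^ (H - 1/2)
                ≤ u ^ (H - 3/2) * (2 * u ^ (H - 1/2)) :=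
                  mul_le_mul_of_nonneg_left hstep (Real.rpow_nonneg hu0.le _)
              _ = 2 * (u ^ (H - 3/2) * u ^ (H - 1/2)) := by ring
              _ = 2 * u ^ (2*H - 2) := by
                  rw [← Real.rpow_add hu0, show (H - 3/2 + (H - 1/2) : ℝ) = 2*H - 2 from by ring]
          have h2 : (∫ u in (2*θ)..s, 2 * u ^ (2*H - 2))
              = 2 * ((s ^ (2*H - 2 + 1) - (2*θ) ^ (2*H - 2 + 1)) / (2*H - 2 + 1)) := by
            rw [intervalIntegral.integral_const_mul,
              integral_rpow (Or.inr ⟨by intro h; nlinarith, h0mem⟩)]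
          refine h1.trans ?_
          rw [h2]
          have hA : (2*θ) ^ (2*H - 2 + 1) ≤ θ ^ (2*H - 2 + 1) :=
            Real.rpow_le_rpow_of_nonpos hθ (by linarith) (by linarith)
          have hB : 0 ≤ s ^ (2*H - 2 + 1) := Real.rpow_nonneg hs0.le _
          have hc0 : (0:ℝ) < 1 - 2*H := by linarith
          have hne1 : (2*H - 2 + 1 : ℝ) ≠ 0 := by intro h; nlinarith
          have e : 2 * ((s ^ (2*H - 2 + 1) - (2*θ) ^ (2*H - 2 + 1)) / (2*H - 2 + 1))
              = 2 * (((2*θ) ^ (2*H - 2 + 1) - s ^ (2*H - 2 + 1)) / (1 - 2*H)) := by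
            rw [show (1 - 2*H : ℝ) = -(2*H - 2 + 1) from by ring, div_neg, ← neg_div, neg_sub]
          rw [e]
          exact mul_le_mul_of_nonneg_left
            ((div_le_div_iff_of_pos_right hc0).mpr (by linarith)) (by norm_num)
        have m1 : θ ^ (H - 3/2) * θ ^ (H - 1/2 + 1) = θ ^ (2*H - 1) := by
          rw [← Real.rpow_add hθ, show (H - 3/2 + (H - 1/2 + 1) : ℝ) = 2*H - 1 from by ring]
        have hIb : I ≤ θ ^ (2*H - 1) / (H - 1/2 + 1) + 2 * (θ ^ (2*H - 1) / (1 - 2*H)) := by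
          rw [hsplit]
          refine add_le_add (hI1.trans_eq ?_) (hI2.trans_eq ?_)
          · rw [← mul_div_assoc, m1]
          · rw [show (2*H - 2 + 1 : ℝ) = 2*H - 1 from by ring]
        have core : t2 ≤ 2 * θ ^ (H - 1/2) := by
          have h1 : t2 ≤ (1/2 - H) * θ ^ (1/2 - H) *
              (θ ^ (2*H - 1) / (H - 1/2 + 1) + 2 * (θ ^ (2*H - 1) / (1 - 2*H))) :=
            mul_le_mul_of_nonneg_left hIb
              (mul_nonneg (by linarith) (Real.rpow_nonneg hθ.le _))
          refine h1.trans ?_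
          have m2 : θ ^ ((1:ℝ)/2 - H) * θ ^ (2*H - 1) = θ ^ (H - 1/2) := by
            rw [← Real.rpow_add hθ, show (1/2 - H + (2*H - 1) : ℝ) = H - 1/2 from by ring]
          have expand : (1/2 - H) * θ ^ (1/2 - H) *
                (θ ^ (2*H - 1) / (H - 1/2 + 1) + 2 * (θ ^ (2*H - 1) / (1 - 2*H)))
              = ((1/2 - H) / (H - 1/2 + 1) + 2 * (1/2 - H) / (1 - 2*H)) * θ ^ (H - 1/2) := by
            calc (1/2 - H) * θ ^ (1/2 - H) *
                  (θ ^ (2*H - 1) / (H - 1/2 + 1) + 2 * (θ ^ (2*H - 1) / (1 - 2*H)))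
                = (θ ^ ((1:ℝ)/2 - H) * θ ^ (2*H - 1)) *
                  ((1/2 - H) / (H - 1/2 + 1) + 2 * (1/2 - H) / (1 - 2*H)) := by ring
              _ = ((1/2 - H) / (H - 1/2 + 1) + 2 * (1/2 - H) / (1 - 2*H)) * θ ^ (H - 1/2) := by
                  rw [m2]; ring
          rw [expand]
          have c1 : (1/2 - H) / (H - 1/2 + 1) ≤ 1 :=
            (div_le_one (by linarith)).mpr (by linarith)
          have c2 : 2 * (1/2 - H) / (1 - 2*H) = 1 := by
            rw [div_eq_one_iff_eq (by linarith : (0:ℝ) < 1 - 2*H).ne']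
            ring
          nlinarith [Real.rpow_nonneg hθ.le (H - 1/2)]
        calc t2 ≤ 2 * θ ^ (H - 1/2) := core
          _ = 2 * (θ ^ (H - 1/2) * 1) := by ring
          _ ≤ 2 * (θ ^ (H - 1/2) * (Real.sqrt T * (s - θ) ^ (H - 1/2))) := by
              have := key (s - θ) hd0 (by linarith)
              nlinarith [Real.rpow_nonneg hθ.le (H - 1/2)]
          _ = 2 * Real.sqrt T * ((s - θ) ^ (H - 1/2) * θ ^ (H - 1/2)) := by ring
    · have : I = 0 := intervalIntegral.integral_undef hf
      rw [ht2def, this, mul_zero]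
      positivity
  -- assemble
  have hcH : 0 ≤ cH H := Real.sqrt_nonneg _
  have main : t1 + t2 ≤ 4 * Real.sqrt T * ((s - θ) ^ (H - 1/2) * θ ^ (H - 1/2)) := by
    have := add_le_add ht1 ht2
    nlinarith [hX, Real.sqrt_nonneg T]
  have hKH : KH H s θ = cH H * (t1 + t2) := by
    rw [KH, ht1def, ht2def, hIdef]
  rw [hKH, abs_mul, abs_of_nonneg hcH, abs_of_nonneg (by linarith : 0 ≤ t1 + t2)]
  calc cH H * (t1 + t2) ≤ cH H * (4 * Real.sqrt T * ((s - θ) ^ (H - 1/2) * θ ^ (H - 1/2))) :=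
        mul_le_mul_of_nonneg_left main hcH
    _ = 4 * Real.sqrt T * cH H * (s - θ) ^ (H - 1/2) * θ ^ (H - 1/2) := by ring
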